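/- arXiv:2310.03902 — 5 statements merged into one kernel-verified Lean document; each statement's English description precedes it below -/
import Mathlib

section
/- Let p0 and p1 be strictly positive probability densities on ℝ^D and let w : ℝ^D → [0,∞) be measurable with 0 < ∫ w(x) p1(x) dx < ∞. Then (∫ w(x) p1(x) dx)^2 ≤ (∫ w(x)^2 · p1(x)(p0(x)+p1(x))/p0(x) dx) · (∫ p0(x)p1(x)/(p0(x)+p1(x)) dx), and equality holds for the harmonic weighting w(x) = p0(x)/(p0(x)+p1(x)). (This is the core inequality behind Theorem 1's claim that the NCE loss minimizes the asymptotic estimation error among all Bregman classification losses in the binary case K = 1.) -/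
open MeasureTheory

/-- Core inequality behind Theorem 1 (optimality of the NCE loss in the binary case
`K = 1`): for strictly positive probability densities `p0, p1` on `ℝ^D` and a
measurable nonnegative weighting `w` with `0 < ∫ w p1 < ∞`, one has
`(∫ w p1)² ≤ (∫ w² p1 (p0 + p1)/p0) · (∫ p0 p1/(p0 + p1))`,
with equality for the harmonic weighting `w = p0/(p0 + p1)`. -/
theorem annealed_bregman_nce_optimality_core {D : ℕ}
    (p0 p1 w : EuclideanSpace ℝ (Fin D) → ℝ)
    (hp0m : Measurable p0) (hp1m : Measurable p1)
    (hp0pos : ∀ x, 0 < p0 x) (hp1pos : ∀ x, 0 < p1 x)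
    (hp0int : ∫ x, p0 x = 1) (hp1int : ∫ x, p1 x = 1)
    (hwm : Measurable w) (hw0 : ∀ x, 0 ≤ w x)
    (hpos : 0 < ∫⁻ x, ENNReal.ofReal (w x * p1 x))
    (hfin : ∫⁻ x, ENNReal.ofReal (w x * p1 x) < ⊤) :
    (∫⁻ x, ENNReal.ofReal (w x * p1 x)) ^ 2 ≤
        (∫⁻ x, ENNReal.ofReal (w x ^ 2 * p1 x * (p0 x + p1 x) / p0 x)) *
          (∫⁻ x, ENNReal.ofReal (p0 x * p1 x / (p0 x + p1 x))) ∧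
      ((∀ x, w x = p0 x / (p0 x + p1 x)) →
        (∫⁻ x, ENNReal.ofReal (w x * p1 x)) ^ 2 =
          (∫⁻ x, ENNReal.ofReal (w x ^ 2 * p1 x * (p0 x + p1 x) / p0 x)) *
            (∫⁻ x, ENNReal.ofReal (p0 x * p1 x / (p0 x + p1 x)))) := by
  have hsum : ∀ x, 0 < p0 x + p1 x := fun x => add_pos (hp0pos x) (hp1pos x)
  constructor
  · -- Cauchy–Schwarz
    set a : EuclideanSpace ℝ (Fin D) → ℝ :=
      fun x => w x * Real.sqrt (p1 x * (p0 x + p1 x) / p0 x) with ha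
    set b : EuclideanSpace ℝ (Fin D) → ℝ :=
      fun x => Real.sqrt (p0 x * p1 x / (p0 x + p1 x)) with hb
    have ha0 : ∀ x, 0 ≤ a x := fun x => mul_nonneg (hw0 x) (Real.sqrt_nonneg _)
    have hb0 : ∀ x, 0 ≤ b x := fun x => Real.sqrt_nonneg _
    have ham : Measurable a := hwm.mul ((hp1m.mul (hp0m.add hp1m)).div hp0m).sqrt
    have hbm : Measurable b := ((hp0m.mul hp1m).div (hp0m.add hp1m)).sqrt
    have hab : ∀ x, a x * b x = w x * p1 x := by
      intro x
      have h1 : 0 ≤ p1 x * (p0 x + p1 x) / p0 x :=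
        div_nonneg (mul_nonneg (hp1pos x).le (hsum x).le) (hp0pos x).le
      have h0 := (hp0pos x).ne'
      have hs := (hsum x).ne'
      rw [ha, hb]
      rw [mul_assoc, ← Real.sqrt_mul h1]
      have : p1 x * (p0 x + p1 x) / p0 x * (p0 x * p1 x / (p0 x + p1 x)) = p1 x ^ 2 := by
        rw [div_mul_div_comm, div_eq_iff (mul_ne_zero h0 hs)]
        ring
      rw [this, Real.sqrt_sq (hp1pos x).le]
    have ha2 : ∀ x, a x ^ 2 = w x ^ 2 * p1 x * (p0 x + p1 x) / p0 x := by
      intro x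
      have h1 : 0 ≤ p1 x * (p0 x + p1 x) / p0 x :=
        div_nonneg (mul_nonneg (hp1pos x).le (hsum x).le) (hp0pos x).le
      rw [ha, mul_pow, Real.sq_sqrt h1]
      ring
    have hb2 : ∀ x, b x ^ 2 = p0 x * p1 x / (p0 x + p1 x) := by
      intro x
      rw [hb, Real.sq_sqrt (div_nonneg (mul_nonneg (hp0pos x).le (hp1pos x).le) (hsum x).le)]
    have hconj : Real.HolderConjugate 2 2 := ⟨by norm_num, by norm_num, by norm_num⟩
    have hr2 : ∀ y : ℝ, 0 ≤ y → ENNReal.ofReal y ^ (2 : ℝ) = ENNReal.ofReal (y ^ 2) := by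
      intro y hy
      rw [ENNReal.ofReal_rpow_of_nonneg hy (by norm_num),
        show ((2:ℝ)) = ((2:ℕ):ℝ) by norm_num, Real.rpow_natCast]
    have key := ENNReal.lintegral_mul_le_Lp_mul_Lq
      (volume : Measure (EuclideanSpace ℝ (Fin D))) hconj
      (f := fun x => ENNReal.ofReal (a x)) (g := fun x => ENNReal.ofReal (b x))
      (ENNReal.measurable_ofReal.comp ham).aemeasurable
      (ENNReal.measurable_ofReal.comp hbm).aemeasurable
    have hlhs : ∫⁻ x, ENNReal.ofReal (a x) * ENNReal.ofReal (b x)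
        = ∫⁻ x, ENNReal.ofReal (w x * p1 x) := by
      refine lintegral_congr fun x => ?_
      rw [← ENNReal.ofReal_mul (ha0 x), hab x]
    have hA : ∫⁻ x, ENNReal.ofReal (a x) ^ (2 : ℝ)
        = ∫⁻ x, ENNReal.ofReal (w x ^ 2 * p1 x * (p0 x + p1 x) / p0 x) := by
      refine lintegral_congr fun x => ?_
      rw [hr2 _ (ha0 x), ha2 x]
    have hB : ∫⁻ x, ENNReal.ofReal (b x) ^ (2 : ℝ)
        = ∫⁻ x, ENNReal.ofReal (p0 x * p1 x / (p0 x + p1 x)) := by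
      refine lintegral_congr fun x => ?_
      rw [hr2 _ (hb0 x), hb2 x]
    simp only [Pi.mul_apply] at key
    rw [hlhs, hA, hB] at key
    calc (∫⁻ x, ENNReal.ofReal (w x * p1 x)) ^ 2
        ≤ ((∫⁻ x, ENNReal.ofReal (w x ^ 2 * p1 x * (p0 x + p1 x) / p0 x)) ^ (1/2 : ℝ) *
            (∫⁻ x, ENNReal.ofReal (p0 x * p1 x / (p0 x + p1 x))) ^ (1/2 : ℝ)) ^ 2 :=
          pow_le_pow_left' key 2
      _ = _ := by
          rw [mul_pow, ← ENNReal.rpow_natCast (_ ^ (1/2 : ℝ)),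
            ← ENNReal.rpow_natCast (_ ^ (1/2 : ℝ)), ← ENNReal.rpow_mul, ← ENNReal.rpow_mul]
          norm_num
  · -- equality for harmonic weighting
    intro hw
    have h1 : ∀ x, w x ^ 2 * p1 x * (p0 x + p1 x) / p0 x = w x * p1 x := by
      intro x
      have h0 := (hp0pos x).ne'
      have hs := (hsum x).ne'
      have hs := (hsum x).ne'
      rw [hw x]
      field_simp
    have h2 : ∀ x, p0 x * p1 x / (p0 x + p1 x) = w x * p1 x := by
      intro x
      have hs := (hsum x).ne'
      rw [hw x]
      field_simp
    have e1 : (∫⁻ x, ENNReal.ofReal (w x ^ 2 * p1 x * (p0 x + p1 x) / p0 x))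
        = ∫⁻ x, ENNReal.ofReal (w x * p1 x) := lintegral_congr fun x => by rw [h1 x]
    have e2 : (∫⁻ x, ENNReal.ofReal (p0 x * p1 x / (p0 x + p1 x)))
        = ∫⁻ x, ENNReal.ofReal (w x * p1 x) := lintegral_congr fun x => by rw [h2 x]
    rw [e1, e2, sq]
end

section
/- Let Z > 0 and define w̃ : [0,1] → [0,1] by w̃(t) = tZ / ((1−t) + tZ). Then w̃ is differentiable with w̃′(t) = Z / ((1−t) + tZ)² for all t ∈ [0,1], and ∫₀¹ w̃′(t)² dt = (Z² + Z + 1)/(3Z) = (1/3)(Z⁻¹ + 1 + Z). -/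
open MeasureTheory

lemma denom_pos (Z : ℝ) (hZ : 0 < Z) {t : ℝ} (ht : t ∈ Set.Icc (0 : ℝ) 1) :
    0 < (1 - t) + t * Z := by
  obtain ⟨h0, h1⟩ := ht
  rcases eq_or_lt_of_le h1 with h | h
  · subst h; simpa using hZ
  · have : 0 < 1 - t := by linarith
    nlinarith

lemma deriv_part (Z : ℝ) (hZ : 0 < Z) {t : ℝ} (ht : t ∈ Set.Icc (0 : ℝ) 1) :
    HasDerivAt (fun s => s * Z / ((1 - s) + s * Z)) (Z / ((1 - t) + t * Z) ^ 2) t := by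
  have hd : ((1 - t) + t * Z) ≠ 0 := (denom_pos Z hZ ht).ne'
  have h1 : HasDerivAt (fun s : ℝ => s * Z) Z t := by
    simpa using (hasDerivAt_id t).mul_const Z
  have h2 : HasDerivAt (fun s : ℝ => (1 - s) + s * Z) (Z - 1) t := by
    have := ((hasDerivAt_id t).const_sub 1).add ((hasDerivAt_id t).mul_const Z)
    exact this.congr_deriv (by ring)
  have : HasDerivAt (fun s => s * Z / ((1 - s) + s * Z)) _ t := h1.div h2 hd
  convert this using 1
  field_simp
  ring

/-- For `Z > 0`, the vanilla arithmetic mixture weight `w̃(t) = tZ/((1−t) + tZ)`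
is differentiable on `[0,1]` with `w̃′(t) = Z/((1−t) + tZ)²`, and
`∫₀¹ w̃′(t)² dt = (Z² + Z + 1)/(3Z) = (1/3)(Z⁻¹ + 1 + Z)`. -/
theorem arithmetic_weight_derivative_and_square_integral (Z : ℝ) (hZ : 0 < Z) :
    (∀ t ∈ Set.Icc (0 : ℝ) 1,
        HasDerivAt (fun s => s * Z / ((1 - s) + s * Z)) (Z / ((1 - t) + t * Z) ^ 2) t) ∧
      (∫ t in (0 : ℝ)..1, (Z / ((1 - t) + t * Z) ^ 2) ^ 2) = (Z ^ 2 + Z + 1) / (3 * Z) ∧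
      (Z ^ 2 + Z + 1) / (3 * Z) = 1 / 3 * (Z⁻¹ + 1 + Z) := by
  refine ⟨fun t ht => deriv_part Z hZ ht, ?_, ?_⟩
  · have huIcc : Set.uIcc (0 : ℝ) 1 = Set.Icc 0 1 := Set.uIcc_of_le (by norm_num)
    have hcont : ContinuousOn (fun t : ℝ => (Z / ((1 - t) + t * Z) ^ 2) ^ 2)
        (Set.uIcc (0 : ℝ) 1) := by
      rw [huIcc]
      apply ContinuousOn.pow
      apply ContinuousOn.div continuousOn_const
      · fun_prop
      · intro t ht
        exact pow_ne_zero _ (denom_pos Z hZ ht).ne'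
    have hint : IntervalIntegrable (fun t : ℝ => (Z / ((1 - t) + t * Z) ^ 2) ^ 2)
        volume 0 1 := hcont.intervalIntegrable
    rcases eq_or_ne Z 1 with hZ1 | hZ1
    · subst hZ1
      simp only [mul_one]
      norm_num
    · have ha : Z - 1 ≠ 0 := sub_ne_zero.mpr hZ1
      set F : ℝ → ℝ := fun t => -Z ^ 2 / (3 * (Z - 1) * ((1 - t) + t * Z) ^ 3) with hF
      have hderivF : ∀ t ∈ Set.uIcc (0 : ℝ) 1,
          HasDerivAt F ((Z / ((1 - t) + t * Z) ^ 2) ^ 2) t := by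
        intro t ht
        rw [huIcc] at ht
        have hdpos := denom_pos Z hZ ht
        have hd : ((1 - t) + t * Z) ≠ 0 := hdpos.ne'
        have h2 : HasDerivAt (fun s : ℝ => (1 - s) + s * Z) (Z - 1) t := by
          have := ((hasDerivAt_id t).const_sub 1).add ((hasDerivAt_id t).mul_const Z)
          exact this.congr_deriv (by ring)
        have h3 : HasDerivAt (fun s : ℝ => 3 * (Z - 1) * ((1 - s) + s * Z) ^ 3)
            (3 * (Z - 1) * (3 * ((1 - t) + t * Z) ^ 2 * (Z - 1))) t := by
          exact ((h2.pow 3).const_mul (3 * (Z - 1))).congr_deriv (by ring)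
        have hg : 3 * (Z - 1) * ((1 - t) + t * Z) ^ 3 ≠ 0 :=
          mul_ne_zero (mul_ne_zero (by norm_num) ha) (pow_ne_zero _ hd)
        have : HasDerivAt F _ t := (hasDerivAt_const t (-Z ^ 2)).div h3 hg
        convert this using 1
        field_simp
        ring
      rw [intervalIntegral.integral_eq_sub_of_hasDerivAt hderivF hint]
      have hd1 : ((1 : ℝ) - 1) + 1 * Z = Z := by ring
      simp only [hF]
      rw [show ((1:ℝ) - 1) + 1 * Z = Z by ring, show ((1:ℝ) - 0) + 0 * Z = 1 by ring]
      field_simp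
      ring
  · field_simp
    ring
end

section
/- (Core of Theorem 4: exponential error of annealed NCE with the vanilla arithmetic path.) Let p0 and p1 be strictly positive probability densities on ℝ^D, let Z > 0, set w̃(t) = tZ/((1−t)+tZ) and p_w(x) = (1−w)p0(x) + w p1(x). Then the Fisher–Rao path length of the reparameterized mixture path t ↦ p_{w̃(t)} satisfies ∫₀¹ w̃′(t)² (∫ (p1(x)−p0(x))²/p_{w̃(t)}(x) dx) dt ≥ (1/3)(Z⁻¹ + 1 + Z) · ∫ (p1(x)−p0(x))²/(p0(x)+p1(x)) dx. -/
open MeasureTheory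

/-- Core of Theorem 4 (exponential error of annealed NCE with the vanilla
arithmetic path): the Fisher–Rao path length of the reparameterized mixture path
`t ↦ p_{w̃(t)}`, `w̃(t) = tZ/((1−t)+tZ)`, `p_w = (1−w)p0 + w p1`, is bounded below
by `(1/3)(Z⁻¹ + 1 + Z) · ∫ (p1 − p0)²/(p0 + p1)`. -/
theorem vanilla_arithmetic_path_exponential_error_core {D : ℕ}
    (p0 p1 : EuclideanSpace ℝ (Fin D) → ℝ)
    (hp0m : Measurable p0) (hp1m : Measurable p1)
    (hp0pos : ∀ x, 0 < p0 x) (hp1pos : ∀ x, 0 < p1 x)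
    (hp0int : ∫ x, p0 x = 1) (hp1int : ∫ x, p1 x = 1)
    (Z : ℝ) (hZ : 0 < Z) :
    ENNReal.ofReal (1 / 3 * (Z⁻¹ + 1 + Z)) *
        ∫⁻ x, ENNReal.ofReal ((p1 x - p0 x) ^ 2 / (p0 x + p1 x)) ≤
      ∫⁻ t in Set.Ioc (0 : ℝ) 1,
        ENNReal.ofReal ((Z / ((1 - t) + t * Z) ^ 2) ^ 2) *
          ∫⁻ x, ENNReal.ofReal ((p1 x - p0 x) ^ 2 /
            ((1 - t * Z / ((1 - t) + t * Z)) * p0 x + t * Z / ((1 - t) + t * Z) * p1 x)) := by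
  set A := ∫⁻ x, ENNReal.ofReal ((p1 x - p0 x) ^ 2 / (p0 x + p1 x)) with hA
  set G : ℝ → ℝ := fun t => (Z / ((1 - t) + t * Z) ^ 2) ^ 2 with hG
  have hspos : ∀ t ∈ Set.Icc (0:ℝ) 1, 0 < (1 - t) + t * Z := by
    intro t ht
    nlinarith [ht.1, ht.2, mul_nonneg ht.1 hZ.le]
  have hGcont : ContinuousOn G (Set.Icc (0:ℝ) 1) := by
    apply ContinuousOn.pow
    apply ContinuousOn.div continuousOn_const
    · fun_prop
    · intro t ht; exact pow_ne_zero _ (hspos t ht).ne'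
  have hGint : IntegrableOn G (Set.Ioc (0:ℝ) 1) :=
    (hGcont.integrableOn_Icc).mono_set Set.Ioc_subset_Icc_self
  have hGcont' : ContinuousOn G (Set.uIcc (0:ℝ) 1) := by
    rw [Set.uIcc_of_le (by norm_num : (0:ℝ) ≤ 1)]; exact hGcont
  have hval : ∫ t in Set.Ioc (0:ℝ) 1, G t = 1 / 3 * (Z⁻¹ + 1 + Z) := by
    rw [← intervalIntegral.integral_of_le (by norm_num : (0:ℝ) ≤ 1)]
    by_cases hZ1 : Z = 1
    · subst hZ1
      have h1 : ∀ t : ℝ, G t = 1 := by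
        intro t; simp only [hG]; norm_num
      simp [h1]
      norm_num
    · have hZ1' : Z - 1 ≠ 0 := sub_ne_zero.2 hZ1
      have key : ∀ t ∈ Set.uIcc (0:ℝ) 1,
          HasDerivAt (fun u => -Z ^ 2 / (3 * (Z - 1)) * (((1 - u) + u * Z) ^ 3)⁻¹)
            (G t) t := by
        intro t ht
        have hs : 0 < (1 - t) + t * Z :=
          hspos t (by rwa [Set.uIcc_of_le (by norm_num : (0:ℝ) ≤ 1)] at ht)
        have hd1 : HasDerivAt (fun u : ℝ => (1 - u) + u * Z) (-1 + 1 * Z) t :=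
          ((hasDerivAt_id t).const_sub 1).add ((hasDerivAt_id t).mul_const Z)
        have hd2 := (hd1.pow 3).inv (pow_ne_zero 3 hs.ne')
        have hd3 := hd2.const_mul (-Z ^ 2 / (3 * (Z - 1)))
        refine hd3.congr_deriv ?_
        simp only [hG, Pi.pow_apply]
        norm_num
        field_simp
        ring
      rw [intervalIntegral.integral_eq_sub_of_hasDerivAt key hGcont'.intervalIntegrable]
      have hZ0 : Z ≠ 0 := hZ.ne'
      field_simp
      ring
  have hGmeas : Measurable fun t => ENNReal.ofReal (G t) := by fun_prop
  have step1 : ∀ t ∈ Set.Ioc (0:ℝ) 1,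
      ENNReal.ofReal (G t) * A ≤
      ENNReal.ofReal (G t) *
        ∫⁻ x, ENNReal.ofReal ((p1 x - p0 x) ^ 2 /
          ((1 - t * Z / ((1 - t) + t * Z)) * p0 x + t * Z / ((1 - t) + t * Z) * p1 x)) := by
    intro t ht
    refine mul_le_mul_right (lintegral_mono fun x => ENNReal.ofReal_le_ofReal ?_) _
    have hs := hspos t ⟨ht.1.le, ht.2⟩
    set w := t * Z / ((1 - t) + t * Z) with hw
    have hw0 : 0 < w := div_pos (mul_pos ht.1 hZ) hs
    have hw1 : w ≤ 1 := by
      rw [hw, div_le_one hs]; nlinarith [ht.2]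
    have hdpos : 0 < (1 - w) * p0 x + w * p1 x := by
      have h1 := mul_nonneg (sub_nonneg.2 hw1) (hp0pos x).le
      have h2 := mul_pos hw0 (hp1pos x)
      linarith
    have hdle : (1 - w) * p0 x + w * p1 x ≤ p0 x + p1 x := by
      have h1 := mul_nonneg hw0.le (hp0pos x).le
      have h2 := mul_nonneg (sub_nonneg.2 hw1) (hp1pos x).le
      nlinarith
    exact div_le_div_of_nonneg_left (sq_nonneg _) hdpos hdle
  calc ENNReal.ofReal (1 / 3 * (Z⁻¹ + 1 + Z)) * A
      ≤ (∫⁻ t in Set.Ioc (0:ℝ) 1, ENNReal.ofReal (G t)) * A := by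
        refine mul_le_mul_left ?_ A
        rw [← hval]
        exact le_of_eq (ofReal_integral_eq_lintegral_ofReal hGint
          (ae_of_all _ fun t => by positivity))
    _ = ∫⁻ t in Set.Ioc (0:ℝ) 1, ENNReal.ofReal (G t) * A :=
        (lintegral_mul_const'' A hGmeas.aemeasurable).symm
    _ ≤ _ := by
        refine lintegral_mono_ae ((ae_restrict_iff' measurableSet_Ioc).2
          (ae_of_all _ fun t ht => ?_))
        exact step1 t ht
end

section
/- Let p0 and p1 be strictly positive probability densities on ℝ^D. Then, as an identity of (possibly infinite) Lebesgue integrals of nonnegative functions, ∫_{ℝ^D} ∫₀¹ (p1(x) − p0(x))² / ((1−t) p0(x) + t p1(x)) dt dx = ∫_{ℝ^D} (p1(x) − p0(x)) (log p1(x) − log p0(x)) dx. In particular, the Fisher–Rao path length of the mixture path p_t = (1−t)p0 + t p1 equals the symmetrized Kullback–Leibler (Jeffreys) divergence D_KL(p1,p0) + D_KL(p0,p1). -/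
open MeasureTheory

lemma mixture_inner_integral (a b : ℝ) (ha : 0 < a) (hb : 0 < b) :
    ∫⁻ t in Set.Ioc (0 : ℝ) 1,
        ENNReal.ofReal ((b - a) ^ 2 / ((1 - t) * a + t * b)) =
      ENNReal.ofReal ((b - a) * (Real.log b - Real.log a)) := by
  set c : ℝ := b - a with hc
  have hpos : ∀ t ∈ Set.Icc (0 : ℝ) 1, 0 < a + t * c := by
    intro t ht
    rcases lt_or_ge t 1 with h | h
    · have h1 : 0 < (1 - t) * a := mul_pos (by linarith) ha
      have h2 : 0 ≤ t * b := mul_nonneg ht.1 hb.le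
      nlinarith
    · have ht1 : t = 1 := le_antisymm ht.2 h
      simp [ht1, hc]
      linarith
  have hcont : ContinuousOn (fun t : ℝ => c ^ 2 / (a + t * c)) (Set.Icc 0 1) := by
    apply ContinuousOn.div continuousOn_const
    · fun_prop
    · intro t ht; exact (hpos t ht).ne'
  have hIcc : Set.uIcc (0 : ℝ) 1 = Set.Icc 0 1 := Set.uIcc_of_le (by norm_num)
  have hInt : IntervalIntegrable (fun t : ℝ => c ^ 2 / (a + t * c)) volume 0 1 := by
    apply ContinuousOn.intervalIntegrable
    rwa [hIcc]
  have hderiv : ∀ t ∈ Set.uIcc (0 : ℝ) 1,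
      HasDerivAt (fun t : ℝ => c * Real.log (a + t * c)) (c ^ 2 / (a + t * c)) t := by
    intro t ht
    rw [hIcc] at ht
    have h1 : HasDerivAt (fun t : ℝ => a + t * c) c t := by
      simpa using ((hasDerivAt_id t).mul_const c).const_add a
    have h2 : HasDerivAt (fun t : ℝ => Real.log (a + t * c)) (c / (a + t * c)) t := by
      have := (Real.hasDerivAt_log (hpos t ht).ne').comp t h1
      simpa [Function.comp_def, div_eq_inv_mul] using this
    have h3 := h2.const_mul c
    have : c * (c / (a + t * c)) = c ^ 2 / (a + t * c) := by ring
    rwa [this] at h3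
  have hFTC := intervalIntegral.integral_eq_sub_of_hasDerivAt hderiv hInt
  have hval : ∫ t in (0:ℝ)..1, c ^ 2 / (a + t * c) = c * (Real.log b - Real.log a) := by
    rw [hFTC]
    have : a + 1 * c = b := by simp [hc]
    rw [this]
    simp [mul_sub]
  have hrw : ∀ t : ℝ, (1 - t) * a + t * b = a + t * c := by intro t; simp [hc]; ring
  have hnn : 0 ≤ᵐ[volume.restrict (Set.Ioc (0:ℝ) 1)] fun t => c ^ 2 / (a + t * c) := by
    filter_upwards [ae_restrict_mem measurableSet_Ioc] with t ht
    exact div_nonneg (sq_nonneg c) (hpos t ⟨ht.1.le, ht.2⟩).le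
  have hInt' : Integrable (fun t : ℝ => c ^ 2 / (a + t * c))
      (volume.restrict (Set.Ioc (0:ℝ) 1)) := by
    rw [intervalIntegrable_iff_integrableOn_Ioc_of_le (by norm_num : (0:ℝ) ≤ 1)] at hInt
    exact hInt
  calc ∫⁻ t in Set.Ioc (0 : ℝ) 1, ENNReal.ofReal (c ^ 2 / ((1 - t) * a + t * b))
      = ∫⁻ t in Set.Ioc (0 : ℝ) 1, ENNReal.ofReal (c ^ 2 / (a + t * c)) := by
        simp_rw [hrw]
    _ = ENNReal.ofReal (∫ t in Set.Ioc (0:ℝ) 1, c ^ 2 / (a + t * c)) :=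
        (ofReal_integral_eq_lintegral_ofReal hInt' hnn).symm
    _ = ENNReal.ofReal (c * (Real.log b - Real.log a)) := by
        rw [← intervalIntegral.integral_of_le (by norm_num : (0:ℝ) ≤ 1), hval]

/-- The Fisher–Rao path length of the mixture path `p_t = (1−t)p0 + t p1` equals
the symmetrized Kullback–Leibler (Jeffreys) divergence: as an identity of
(possibly infinite) Lebesgue integrals of nonnegative functions,
`∫ ∫₀¹ (p1 − p0)²/((1−t)p0 + t p1) dt dx = ∫ (p1 − p0)(log p1 − log p0) dx`. -/
theorem mixture_path_length_eq_jeffreys_divergence {D : ℕ}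
    (p0 p1 : EuclideanSpace ℝ (Fin D) → ℝ)
    (hp0m : Measurable p0) (hp1m : Measurable p1)
    (hp0pos : ∀ x, 0 < p0 x) (hp1pos : ∀ x, 0 < p1 x)
    (hp0int : ∫ x, p0 x = 1) (hp1int : ∫ x, p1 x = 1) :
    ∫⁻ x, ∫⁻ t in Set.Ioc (0 : ℝ) 1,
        ENNReal.ofReal ((p1 x - p0 x) ^ 2 / ((1 - t) * p0 x + t * p1 x)) =
      ∫⁻ x, ENNReal.ofReal ((p1 x - p0 x) * (Real.log (p1 x) - Real.log (p0 x))) := by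
  congr 1
  funext x
  exact mixture_inner_integral (p0 x) (p1 x) (hp0pos x) (hp1pos x)
end

section
/- (Normalization of the Gelman–Meng optimal path.) Let α ∈ (0, π/4], and for t ∈ [0,1] define a_t = cos((2t−1)α)/(2 cos α) − sin((2t−1)α)/(2 sin α) and b_t = cos((2t−1)α)/(2 cos α) + sin((2t−1)α)/(2 sin α). Let p0 and p1 be probability densities on ℝ^D whose Hellinger affinity satisfies ∫ √(p0(x) p1(x)) dx = cos(2α). Then for every t ∈ [0,1], the function x ↦ (a_t √(p0(x)) + b_t √(p1(x)))² is a probability density: ∫ (a_t √(p0(x)) + b_t √(p1(x)))² dx = 1. -/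
open MeasureTheory

/-- Normalization of the Gelman–Meng optimal path: if `p0, p1` are probability
densities with Hellinger affinity `∫ √(p0 p1) = cos(2α)` for some `α ∈ (0, π/4]`,
then for every `t ∈ [0,1]` the function `x ↦ (a_t √(p0 x) + b_t √(p1 x))²`, with
`a_t = cos((2t−1)α)/(2cos α) − sin((2t−1)α)/(2sin α)` and
`b_t = cos((2t−1)α)/(2cos α) + sin((2t−1)α)/(2sin α)`, is a probability density. -/
theorem gelman_meng_optimal_path_is_normalized {D : ℕ}
    (α : ℝ) (hα : α ∈ Set.Ioc (0 : ℝ) (Real.pi / 4))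
    (p0 p1 : EuclideanSpace ℝ (Fin D) → ℝ)
    (hp0m : Measurable p0) (hp1m : Measurable p1)
    (hp0nn : ∀ x, 0 ≤ p0 x) (hp1nn : ∀ x, 0 ≤ p1 x)
    (hp0int : ∫ x, p0 x = 1) (hp1int : ∫ x, p1 x = 1)
    (haff : ∫ x, Real.sqrt (p0 x * p1 x) = Real.cos (2 * α)) :
    ∀ t ∈ Set.Icc (0 : ℝ) 1,
      ∫ x, ((Real.cos ((2 * t - 1) * α) / (2 * Real.cos α) -
              Real.sin ((2 * t - 1) * α) / (2 * Real.sin α)) * Real.sqrt (p0 x) +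
            (Real.cos ((2 * t - 1) * α) / (2 * Real.cos α) +
              Real.sin ((2 * t - 1) * α) / (2 * Real.sin α)) * Real.sqrt (p1 x)) ^ 2 = 1 := by
  intro t ht
  obtain ⟨hα0, hα4⟩ := hα
  have hπ : 0 < Real.pi := Real.pi_pos
  have hsin : 0 < Real.sin α := Real.sin_pos_of_pos_of_lt_pi hα0 (by nlinarith)
  have hcos : 0 < Real.cos α := Real.cos_pos_of_mem_Ioo ⟨by linarith, by nlinarith⟩
  -- integrability
  have hI0 : Integrable p0 := by
    by_contra h
    rw [integral_undef h] at hp0int; norm_num at hp0int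
  have hI1 : Integrable p1 := by
    by_contra h
    rw [integral_undef h] at hp1int; norm_num at hp1int
  have hIg : Integrable (fun x => Real.sqrt (p0 x * p1 x)) := by
    refine Integrable.mono' ((hI0.add hI1).const_mul (1/2)) ?_ ?_
    · exact ((hp0m.mul hp1m).sqrt).aestronglyMeasurable
    · refine Filter.Eventually.of_forall fun x => ?_
      have h2 := Real.sqrt_nonneg (p0 x * p1 x)
      have hle : Real.sqrt (p0 x * p1 x) ≤ (p0 x + p1 x) / 2 := by
        have h3 : p0 x * p1 x ≤ ((p0 x + p1 x) / 2) ^ 2 := by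
          nlinarith [sq_nonneg (p0 x - p1 x)]
        calc Real.sqrt (p0 x * p1 x) ≤ Real.sqrt (((p0 x + p1 x) / 2) ^ 2) :=
              Real.sqrt_le_sqrt h3
          _ = (p0 x + p1 x) / 2 := Real.sqrt_sq (by have := hp0nn x; have := hp1nn x; linarith)
      rw [Real.norm_eq_abs, abs_of_nonneg h2]
      simpa [Pi.add_apply] using hle.trans_eq (by ring)
  set a := Real.cos ((2 * t - 1) * α) / (2 * Real.cos α) -
      Real.sin ((2 * t - 1) * α) / (2 * Real.sin α) with ha
  set b := Real.cos ((2 * t - 1) * α) / (2 * Real.cos α) +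
      Real.sin ((2 * t - 1) * α) / (2 * Real.sin α) with hb
  have hpt : ∀ x, (a * Real.sqrt (p0 x) + b * Real.sqrt (p1 x)) ^ 2
      = a ^ 2 * p0 x + b ^ 2 * p1 x + (2 * a * b) * Real.sqrt (p0 x * p1 x) := by
    intro x
    rw [Real.sqrt_mul (hp0nn x)]
    have h0 := Real.sq_sqrt (hp0nn x)
    have h1 := Real.sq_sqrt (hp1nn x)
    nlinarith [h0, h1]
  calc ∫ x, (a * Real.sqrt (p0 x) + b * Real.sqrt (p1 x)) ^ 2
      = ∫ x, (a ^ 2 * p0 x + b ^ 2 * p1 x + (2 * a * b) * Real.sqrt (p0 x * p1 x)) := by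
        exact integral_congr_ae (Filter.Eventually.of_forall hpt)
    _ = a ^ 2 * (∫ x, p0 x) + b ^ 2 * (∫ x, p1 x)
          + (2 * a * b) * ∫ x, Real.sqrt (p0 x * p1 x) := by
        have hfg : Integrable (fun x => a ^ 2 * p0 x + b ^ 2 * p1 x) :=
          (hI0.const_mul _).add (hI1.const_mul _)
        rw [integral_add hfg (hIg.const_mul _),
          integral_add (hI0.const_mul _) (hI1.const_mul _),
          integral_const_mul, integral_const_mul, integral_const_mul]
    _ = 1 := by
        rw [hp0int, hp1int, haff]
        have h2a : Real.cos (2 * α) = 2 * Real.cos α ^ 2 - 1 := Real.cos_two_mul α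
        have hpy : Real.sin ((2*t-1)*α) ^ 2 + Real.cos ((2*t-1)*α) ^ 2 = 1 :=
          Real.sin_sq_add_cos_sq _
        have hA : Real.sin α ^ 2 + Real.cos α ^ 2 = 1 := Real.sin_sq_add_cos_sq α
        rw [ha, hb, h2a]
        field_simp
        linear_combination (4 * Real.sin α ^ 2 * Real.cos α ^ 2) * hpy -
          (4 * Real.cos α ^ 2 * Real.sin ((2 * t - 1) * α) ^ 2) * hA
end
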